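/- Let G=(V,E) be a connected simple graph not isomorphic to a star, and let G'=(V',E') = σ(G). If S1 ⊊ V' is such that G'[S1] is a proportionally dense subgraph, then there exists S2 ⊊ V' such that G'[S2] is a proportionally dense subgraph, |S2| ≥ |S1|, and M ∪ {z1,z2} ⊆ S2. -/

import Mathlib

open SimpleGraph

/-- Number of neighbors of `v` inside `T`. -/
noncomputable def degIn {W : Type*} (G : SimpleGraph W) (T : Set W) (v : W) : ℕ :=
  (T ∩ G.neighborSet v).ncard

/-- `G[S]` is a proportionally dense subgraph. -/
def IsPDS {W : Type*} (G : SimpleGraph W) (S : Set W) : Prop :=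
  S ⊂ Set.univ ∧ 2 ≤ S.ncard ∧
    ∀ u ∈ S, degIn G Sᶜ u * (S.ncard - 1) ≤ degIn G S u * Sᶜ.ncard

/-- A star is a complete bipartite graph `K_{1,ℓ}`, `ℓ ≥ 1`. -/
def IsStar {V : Type*} (G : SimpleGraph V) : Prop :=
  ∃ ℓ : ℕ, 1 ≤ ℓ ∧ Nonempty (G ≃g completeBipartiteGraph Unit (Fin ℓ))

/-- Vertex type of the split graph `σ(G)`: `z1, z2` (the two booleans), `M` (edge
vertices), and `N = V`. -/
abbrev SigmaVert (V : Type*) (G : SimpleGraph V) : Type _ := (Bool ⊕ ↥G.edgeSet) ⊕ V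

/-- The split graph `σ(G)`. -/
def sigmaGraph {V : Type*} (G : SimpleGraph V) : SimpleGraph (SigmaVert V G) where
  Adj x y :=
    match x, y with
    | Sum.inl a, Sum.inl b => a ≠ b
    | Sum.inl (Sum.inr e), Sum.inr u => u ∉ (e : Sym2 V)
    | Sum.inr u, Sum.inl (Sum.inr e) => u ∉ (e : Sym2 V)
    | _, _ => False
  symm := by
    constructor
    rintro ((a | e) | u) ((b | f) | v) h <;> simp_all <;> tauto
  loopless := by
    constructor
    rintro ((a | e) | u) h <;> simp_all

/-- The set `M ∪ {z1, z2}` (the clique side) in `σ(G)`. -/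
def sigmaClique {V : Type*} (G : SimpleGraph V) : Set (SigmaVert V G) :=
  Set.range Sum.inl

/-- The set `M` of edge-vertices in `σ(G)`. -/
def sigmaM {V : Type*} (G : SimpleGraph V) : Set (SigmaVert V G) :=
  Set.range (fun e : ↥G.edgeSet => Sum.inl (Sum.inr e))

set_option linter.unusedSectionVars false

section Helpers

variable {V : Type*} [Fintype V] (G : SimpleGraph V)

/-- A connected graph has at least `n - 1` edges. -/
lemma sigma_card_le_card_edgeSet_add_one (hconn : G.Connected) :
    Fintype.card V ≤ Nat.card G.edgeSet + 1 := by
  classical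
  obtain ⟨r⟩ := hconn.nonempty
  have key : ∀ v : V, v ≠ r → ∃ u, G.Adj v u ∧ G.dist u r < G.dist v r := by
    intro v hv
    obtain ⟨w, hw⟩ := (hconn v r).exists_walk_length_eq_dist
    cases w with
    | nil => exact absurd rfl hv
    | cons h p =>
      refine ⟨_, h, ?_⟩
      have h1 : G.dist _ r ≤ p.length := SimpleGraph.dist_le p
      simp only [SimpleGraph.Walk.length_cons] at hw
      omega
  choose f hf1 hf2 using key
  set F : {v : V // v ≠ r} → G.edgeSet :=
    fun v => ⟨s(v.1, f v.1 v.2), (hf1 v.1 v.2)⟩ with hF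
  have hinj : Function.Injective F := by
    rintro ⟨v1, h1⟩ ⟨v2, h2⟩ hEq
    simp only [hF, Subtype.mk.injEq, Sym2.eq, Sym2.rel_iff', Prod.mk.injEq,
      Prod.swap_prod_mk] at hEq
    replace hEq := Sym2.eq_iff.mp (congrArg Subtype.val hEq)
    rcases hEq with ⟨e1, -⟩ | ⟨e1, e2⟩
    · simp [e1]
    · exfalso
      have a := hf2 v1 h1
      rw [e2, e1] at a
      have b := hf2 v2 h2
      omega
  have hcard : Nat.card {v : V // v ≠ r} ≤ Nat.card G.edgeSet :=
    Nat.card_le_card_of_injective F hinj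
  have : Nat.card {v : V // v ≠ r} = Fintype.card V - 1 := by
    rw [Nat.card_eq_fintype_card, Fintype.card_subtype_compl]
    simp
  have hpos : 0 < Fintype.card V := Fintype.card_pos_iff.mpr ⟨r⟩
  omega

/-- Any set of vertices contains an independent subset missing at most one vertex
per internal edge. -/
lemma sigma_exists_indep_subset :
    ∀ (k : ℕ) (B : Set V), B.ncard ≤ k →
    ∃ A : Set V, A ⊆ B ∧ (∀ u v : V, G.Adj u v → ¬(u ∈ A ∧ v ∈ A)) ∧
      B.ncard ≤ A.ncard + {e : Sym2 V | e ∈ G.edgeSet ∧ ∀ v ∈ e, v ∈ B}.ncard := by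
  classical
  intro k
  induction k with
  | zero =>
    intro B hB
    exact ⟨B, le_refl _, by
      intro u v _ ⟨hu, _⟩
      have : B.Nonempty := ⟨u, hu⟩
      have := this.ncard_pos B.toFinite
      omega, by omega⟩
  | succ k ih =>
    intro B hB
    by_cases hind : ∀ u v : V, G.Adj u v → ¬(u ∈ B ∧ v ∈ B)
    · exact ⟨B, le_refl _, hind, by omega⟩
    · push_neg at hind
      obtain ⟨u, v, hadj, hu, hv⟩ := hind
      have hBfin : B.Finite := B.toFinite
      have hBpos : 0 < B.ncard := (Set.nonempty_of_mem hu).ncard_pos hBfin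
      have hcard' : (B \ {u}).ncard = B.ncard - 1 := by
        exact Set.ncard_diff_singleton_of_mem hu
      obtain ⟨A, hA1, hA2, hA3⟩ := ih (B \ {u}) (by omega)
      refine ⟨A, hA1.trans Set.diff_subset, hA2, ?_⟩
      set EB := {e : Sym2 V | e ∈ G.edgeSet ∧ ∀ w ∈ e, w ∈ B}
      set EB' := {e : Sym2 V | e ∈ G.edgeSet ∧ ∀ w ∈ e, w ∈ B \ {u}}
      have hmem : s(u, v) ∈ EB := by
        constructor
        · exact hadj
        · intro w hw
          rw [Sym2.mem_iff] at hw
          rcases hw with rfl | rfl <;> assumption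
      have hsub : EB' ⊆ EB \ {s(u, v)} := by
        rintro e ⟨he1, he2⟩
        refine ⟨⟨he1, fun w hw => (he2 w hw).1⟩, ?_⟩
        intro hc
        simp only [Set.mem_singleton_iff] at hc
        subst hc
        exact (he2 u (Sym2.mem_mk_left u v)).2 rfl
      have h1 : EB'.ncard ≤ (EB \ {s(u,v)}).ncard :=
        Set.ncard_le_ncard hsub (EB \ {s(u,v)}).toFinite
      have h2 : (EB \ {s(u,v)}).ncard = EB.ncard - 1 := by
        exact Set.ncard_diff_singleton_of_mem hmem
      have h3 : 0 < EB.ncard := (Set.nonempty_of_mem hmem).ncard_pos EB.toFinite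
      omega

lemma sigma_adj_e_inr (e : ↥G.edgeSet) (u : V) :
    (sigmaGraph G).Adj (Sum.inl (Sum.inr e)) (Sum.inr u) ↔ u ∉ (e : Sym2 V) := Iff.rfl

lemma sigma_adj_z_inr (b : Bool) (u : V) :
    ¬ (sigmaGraph G).Adj (Sum.inl (Sum.inl b)) (Sum.inr u) := fun h => h

lemma sigma_adj_inr_inr (u w : V) :
    ¬ (sigmaGraph G).Adj (Sum.inr u) (Sum.inr w) := fun h => h

lemma sigma_adj_e_inl (e : ↥G.edgeSet) (y : Bool ⊕ ↥G.edgeSet) :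
    (sigmaGraph G).Adj (Sum.inl (Sum.inr e)) (Sum.inl y) ↔ Sum.inr e ≠ y := by
  rcases y with b | f <;> exact Iff.rfl

lemma sigma_ncard_range_inl :
    (Set.range (Sum.inl : (Bool ⊕ ↥G.edgeSet) → SigmaVert V G)).ncard
      = 2 + Nat.card ↥G.edgeSet := by
  rw [← Set.image_univ, Set.ncard_image_of_injective _ Sum.inl_injective, Set.ncard_univ,
    Nat.card_sum]
  simp [Nat.card_eq_fintype_card]

lemma sigma_card_vert :
    Nat.card (SigmaVert V G) = 2 + Nat.card ↥G.edgeSet + Fintype.card V := by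
  simp [Nat.card_sum, Nat.card_eq_fintype_card]

/-- The clique together with (the image of) an independent set is a PDS. -/
lemma sigma_clique_union_pds (hnm : Fintype.card V ≤ Nat.card ↥G.edgeSet + 1)
    (A : Set V) (hind : ∀ u v : V, G.Adj u v → ¬(u ∈ A ∧ v ∈ A)) (hA : A ≠ Set.univ) :
    IsPDS (sigmaGraph G) ((Set.range Sum.inl ∪ Sum.inr '' A : Set (SigmaVert V G))) ∧
      ((Set.range Sum.inl ∪ Sum.inr '' A : Set (SigmaVert V G))).ncard
        = 2 + Nat.card ↥G.edgeSet + A.ncard := by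
  classical
  set m := Nat.card ↥G.edgeSet with hm
  set n := Fintype.card V with hn
  set a := A.ncard with ha
  set o := Aᶜ.ncard with ho
  set S2 : Set (SigmaVert V G) := Set.range Sum.inl ∪ Sum.inr '' A with hS2
  have hao : a + o = n := by
    rw [ha, ho, hn, Set.ncard_add_ncard_compl, Nat.card_eq_fintype_card]
  obtain ⟨w0, hw0⟩ := Set.ne_univ_iff_exists_notMem A |>.mp hA
  have hopos : 1 ≤ o := (Set.nonempty_of_mem (show w0 ∈ Aᶜ from hw0)).ncard_pos Aᶜ.toFinite
  have hcompl : S2ᶜ = Sum.inr '' Aᶜ := by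
    ext x
    cases x with
    | inl y => simp [hS2]
    | inr u => simp [hS2]
  have hdisj : Disjoint (Set.range (Sum.inl : (Bool ⊕ ↥G.edgeSet) → SigmaVert V G))
      (Sum.inr '' A) := by
    rw [Set.disjoint_left]
    rintro x ⟨y, rfl⟩ ⟨u, -, h⟩
    exact Sum.inl_ne_inr h.symm
  have hcard : S2.ncard = 2 + m + a := by
    rw [hS2, Set.ncard_union_eq hdisj (Set.toFinite _) (Set.toFinite _), sigma_ncard_range_inl,
      Set.ncard_image_of_injective _ Sum.inr_injective]
  have hcardc : S2ᶜ.ncard = o := by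
    rw [hcompl, Set.ncard_image_of_injective _ Sum.inr_injective]
  refine ⟨⟨?_, ?_, ?_⟩, hcard⟩
  · rw [Set.ssubset_univ_iff, Set.ne_univ_iff_exists_notMem]
    refine ⟨Sum.inr w0, ?_⟩
    rw [hS2]
    rintro (⟨y, hy⟩ | ⟨u, hu, h⟩)
    · exact Sum.inl_ne_inr hy
    · exact hw0 ((Sum.inr_injective h) ▸ hu)
  · omega
  · rintro (⟨b | e⟩ | u) hu
    · -- z vertex: no neighbors outside
      have : S2ᶜ ∩ (sigmaGraph G).neighborSet (Sum.inl (Sum.inl b)) = ∅ := by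
        rw [hcompl]
        ext x
        simp only [Set.mem_inter_iff, Set.mem_image, SimpleGraph.mem_neighborSet,
          Set.mem_empty_iff_false, iff_false, not_and]
        rintro ⟨w, -, rfl⟩
        exact sigma_adj_z_inr G b w
      rw [degIn, this, Set.ncard_empty, zero_mul]
      exact Nat.zero_le _
    · -- edge vertex: the main case
      obtain ⟨⟨x, y⟩, hxy⟩ := (e : Sym2 V).exists_rep
      have hadj : G.Adj x y := by
        have := e.2
        rw [← hxy] at this
        exact this
      have hnboth : ¬(x ∈ A ∧ y ∈ A) := hind x y hadj
      obtain ⟨w, hwA, hwe⟩ : ∃ w, w ∉ A ∧ w ∈ (e : Sym2 V) := by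
        by_cases hx : x ∈ A
        · exact ⟨y, fun hy => hnboth ⟨hx, hy⟩, by rw [← hxy]; exact Sym2.mem_mk_right x y⟩
        · exact ⟨x, hx, by rw [← hxy]; exact Sym2.mem_mk_left x y⟩
      set xe : SigmaVert V G := Sum.inl (Sum.inr e) with hxe
      have hout : degIn (sigmaGraph G) S2ᶜ xe + 1 ≤ o := by
        have hsub : S2ᶜ ∩ (sigmaGraph G).neighborSet xe ⊆ (Sum.inr '' Aᶜ) \ {Sum.inr w} := by
          rintro z ⟨hz1, hz2⟩
          rw [hcompl] at hz1
          obtain ⟨t, ht, rfl⟩ := hz1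
          refine ⟨⟨t, ht, rfl⟩, ?_⟩
          simp only [Set.mem_singleton_iff]
          intro hc
          have : t = w := Sum.inr_injective hc
          subst this
          exact (hz2 : t ∉ (e : Sym2 V)) hwe
        have h1 : degIn (sigmaGraph G) S2ᶜ xe ≤ ((Sum.inr '' Aᶜ) \ {Sum.inr w}).ncard :=
          Set.ncard_le_ncard hsub (Set.toFinite _)
        have h2 : ((Sum.inr '' Aᶜ : Set (SigmaVert V G)) \ {Sum.inr w}).ncard = o - 1 := by
          rw [Set.ncard_diff_singleton_of_mem
            (show (Sum.inr w : SigmaVert V G) ∈ Sum.inr '' Aᶜ from ⟨w, hwA, rfl⟩),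
            Set.ncard_image_of_injective _ Sum.inr_injective]
        omega
      have hin : m + a ≤ degIn (sigmaGraph G) S2 xe := by
        set L : Set (SigmaVert V G) :=
          (Set.range Sum.inl \ {xe}) ∪ Sum.inr '' (A \ {x, y}) with hL
        have hLsub : L ⊆ S2 ∩ (sigmaGraph G).neighborSet xe := by
          rintro z (⟨⟨c, rfl⟩, hz2⟩ | ⟨t, ⟨htA, htxy⟩, rfl⟩)
          · refine ⟨Set.mem_union_left _ ⟨c, rfl⟩, ?_⟩
            rw [SimpleGraph.mem_neighborSet, sigma_adj_e_inl]
            simp only [Set.mem_singleton_iff] at hz2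
            intro hc
            exact hz2 (by rw [hxe, hc])
          · refine ⟨Set.mem_union_right _ ⟨t, htA, rfl⟩, ?_⟩
            show t ∉ (e : Sym2 V)
            rw [← hxy, Sym2.mem_iff]
            simp only [Set.mem_insert_iff, Set.mem_singleton_iff] at htxy
            tauto
        have hLdisj : Disjoint (Set.range (Sum.inl : (Bool ⊕ ↥G.edgeSet) → SigmaVert V G) \ {xe})
            (Sum.inr '' (A \ {x, y})) := by
          rw [Set.disjoint_left]
          rintro z ⟨⟨c, rfl⟩, -⟩ ⟨t, -, h⟩
          exact Sum.inl_ne_inr h.symm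
        have hL1 : (Set.range (Sum.inl : (Bool ⊕ ↥G.edgeSet) → SigmaVert V G) \ {xe}).ncard
            = 2 + m - 1 := by
          rw [Set.ncard_diff_singleton_of_mem
            (show xe ∈ Set.range (Sum.inl : (Bool ⊕ ↥G.edgeSet) → SigmaVert V G) from
              ⟨Sum.inr e, rfl⟩), sigma_ncard_range_inl G]
        have hj : (A ∩ {x, y}).ncard ≤ 1 := by
          by_cases hx : x ∈ A
          · have : A ∩ {x, y} ⊆ {x} := by
              rintro t ⟨htA, ht⟩
              simp only [Set.mem_insert_iff, Set.mem_singleton_iff] at ht ⊢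
              rcases ht with rfl | rfl
              · rfl
              · exact absurd ⟨hx, htA⟩ hnboth
            simpa using Set.ncard_le_ncard this (Set.toFinite _)
          · have : A ∩ {x, y} ⊆ {y} := by
              rintro t ⟨htA, ht⟩
              simp only [Set.mem_insert_iff, Set.mem_singleton_iff] at ht ⊢
              rcases ht with rfl | rfl
              · exact absurd htA hx
              · rfl
            simpa using Set.ncard_le_ncard this (Set.toFinite _)
        have hL2 : (A \ {x, y}).ncard = a - (A ∩ {x, y}).ncard := by
          rw [← Set.diff_self_inter]
          exact Set.ncard_diff Set.inter_subset_left (Set.toFinite _)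
        have hjle : (A ∩ {x, y}).ncard ≤ a := Set.ncard_le_ncard Set.inter_subset_left A.toFinite
        have hLcard : L.ncard = (2 + m - 1) + (a - (A ∩ {x, y}).ncard) := by
          rw [hL, Set.ncard_union_eq hLdisj (Set.toFinite _) (Set.toFinite _), hL1,
            Set.ncard_image_of_injective _ Sum.inr_injective, hL2]
        have := Set.ncard_le_ncard hLsub (Set.toFinite _)
        rw [degIn]
        omega
      rw [hcard, hcardc]
      have hole : o ≤ m + a + 1 := by omega
      set dout := degIn (sigmaGraph G) S2ᶜ xe
      set dS := degIn (sigmaGraph G) S2 xe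
      have : dout * (2 + m + a - 1) = dout * (m + a + 1) := by
        congr 1
        omega
      rw [this]
      nlinarith [hout, hin, hole, hopos]
    · -- N vertex in A: no neighbors outside
      have : S2ᶜ ∩ (sigmaGraph G).neighborSet (Sum.inr u) = ∅ := by
        rw [hcompl]
        ext z
        simp only [Set.mem_inter_iff, Set.mem_image, SimpleGraph.mem_neighborSet,
          Set.mem_empty_iff_false, iff_false, not_and]
        rintro ⟨t, -, rfl⟩
        exact fun h => sigma_adj_inr_inr G u t h
      rw [degIn, this, Set.ncard_empty, zero_mul]
      exact Nat.zero_le _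

/-- An edge-vertex whose two endpoints are in a PDS `S1` cannot itself be in `S1`. -/
lemma sigma_pds_inner_edge_not_mem (S1 : Set (SigmaVert V G)) (h1 : IsPDS (sigmaGraph G) S1)
    (e : ↥G.edgeSet) (x y : V) (hxy : s(x, y) = (e : Sym2 V))
    (hx : Sum.inr x ∈ S1) (hy : Sum.inr y ∈ S1) : Sum.inl (Sum.inr e) ∉ S1 := by
  classical
  intro hmem
  obtain ⟨hss, h2, hineq⟩ := h1
  have hadj : G.Adj x y := by
    have := e.2
    rw [← hxy] at this
    exact this
  have hne : x ≠ y := hadj.ne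
  set xe : SigmaVert V G := Sum.inl (Sum.inr e) with hxe
  set T : Set (SigmaVert V G) := {xe, Sum.inr x, Sum.inr y} with hT
  have hTsub : T ⊆ S1 := by
    intro z hz
    simp only [hT, Set.mem_insert_iff, Set.mem_singleton_iff] at hz
    rcases hz with rfl | rfl | rfl <;> assumption
  have hT3 : T.ncard = 3 := by
    rw [hT, Set.ncard_insert_of_notMem (by simp) (Set.toFinite _),
      Set.ncard_insert_of_notMem (by simp [hne]) (Set.toFinite _), Set.ncard_singleton]
  have hnb : (sigmaGraph G).neighborSet xe = Tᶜ := by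
    ext z
    simp only [SimpleGraph.mem_neighborSet, Set.mem_compl_iff]
    cases z with
    | inl c =>
      rw [sigma_adj_e_inl]
      simp only [hT, Set.mem_insert_iff, Set.mem_singleton_iff, hxe]
      constructor
      · rintro h (hc | hc | hc)
        · exact h (Sum.inl_injective hc.symm)
        · exact Sum.inl_ne_inr hc
        · exact Sum.inl_ne_inr hc
      · intro h hc
        exact h (Or.inl (by rw [hc]))
    | inr t =>
      show (t ∉ (e : Sym2 V)) ↔ _
      rw [← hxy, Sym2.mem_iff]
      simp only [hT, Set.mem_insert_iff, Set.mem_singleton_iff, hxe]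
      constructor
      · rintro h (hc | hc | hc)
        · exact Sum.inl_ne_inr hc.symm
        · exact h (Or.inl (Sum.inr_injective hc))
        · exact h (Or.inr (Sum.inr_injective hc))
      · intro h hc
        rcases hc with rfl | rfl
        · exact h (Or.inr (Or.inl rfl))
        · exact h (Or.inr (Or.inr rfl))
  have hdout : degIn (sigmaGraph G) S1ᶜ xe = S1ᶜ.ncard := by
    rw [degIn, hnb, Set.inter_eq_self_of_subset_left (Set.compl_subset_compl.mpr hTsub)]
  have hdin : degIn (sigmaGraph G) S1 xe = S1.ncard - 3 := by
    rw [degIn, hnb, ← Set.diff_eq, Set.ncard_diff hTsub (Set.toFinite _), hT3]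
  have hcpos : 1 ≤ S1ᶜ.ncard := by
    obtain ⟨z, hz⟩ := Set.ne_univ_iff_exists_notMem S1 |>.mp hss.ne
    exact (Set.nonempty_of_mem (show z ∈ S1ᶜ from hz)).ncard_pos (Set.toFinite _)
  have h3s : 3 ≤ S1.ncard := hT3 ▸ Set.ncard_le_ncard hTsub (Set.toFinite _)
  have key := hineq xe hmem
  rw [hdout, hdin] at key
  obtain ⟨d, hd⟩ : ∃ d, S1.ncard = d + 3 := ⟨S1.ncard - 3, by omega⟩
  rw [hd, show d + 3 - 1 = d + 2 from rfl, show d + 3 - 3 = d from by omega] at key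
  nlinarith [key, hcpos]

end Helpers

/-- Lemma 2 of the paper: any PDS of `σ(G)` can be turned into a PDS at least as
large that contains `M ∪ {z1, z2}`. -/
theorem sigma_pds_enlarge {V : Type*} [Fintype V] (G : SimpleGraph V)
    (hconn : G.Connected) (hstar : ¬ IsStar G)
    (S1 : Set (SigmaVert V G)) (h1 : IsPDS (sigmaGraph G) S1) :
    ∃ S2 : Set (SigmaVert V G),
      IsPDS (sigmaGraph G) S2 ∧ S1.ncard ≤ S2.ncard ∧ sigmaClique G ⊆ S2 := by
  classical
  have hnm : Fintype.card V ≤ Nat.card ↥G.edgeSet + 1 :=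
    sigma_card_le_card_edgeSet_add_one G hconn
  haveI : Nonempty V := hconn.nonempty
  set B : Set V := {u : V | Sum.inr u ∈ S1} with hB
  obtain ⟨A, hAB, hAind, hAcard⟩ := sigma_exists_indep_subset G B.ncard B le_rfl
  -- the edges inside B all correspond to edge-vertices outside S1
  set Min : Set ↥G.edgeSet := {e : ↥G.edgeSet | Sum.inl (Sum.inr e) ∈ S1} with hMin
  have hESsub : {e : Sym2 V | e ∈ G.edgeSet ∧ ∀ v ∈ e, v ∈ B} ⊆ Subtype.val '' Minᶜ := by
    rintro q ⟨hq1, hq2⟩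
    refine ⟨⟨q, hq1⟩, ?_, rfl⟩
    show Sum.inl (Sum.inr (⟨q, hq1⟩ : ↥G.edgeSet)) ∉ S1
    obtain ⟨⟨x, y⟩, hxy⟩ := q.exists_rep
    refine sigma_pds_inner_edge_not_mem G S1 h1 ⟨q, hq1⟩ x y hxy ?_ ?_
    · exact hq2 x (by rw [← hxy]; exact Sym2.mem_mk_left x y)
    · exact hq2 y (by rw [← hxy]; exact Sym2.mem_mk_right x y)
  have hES : {e : Sym2 V | e ∈ G.edgeSet ∧ ∀ v ∈ e, v ∈ B}.ncard ≤ Minᶜ.ncard := by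
    calc {e : Sym2 V | e ∈ G.edgeSet ∧ ∀ v ∈ e, v ∈ B}.ncard
        ≤ (Subtype.val '' Minᶜ).ncard := Set.ncard_le_ncard hESsub (Set.toFinite _)
      _ = Minᶜ.ncard := Set.ncard_image_of_injective _ Subtype.val_injective
  have hmk : Min.ncard + Minᶜ.ncard = Nat.card ↥G.edgeSet := by
    rw [Set.ncard_add_ncard_compl]
  -- decompose S1
  have hS1dec : S1 = (S1 ∩ Set.range Sum.inl) ∪ Sum.inr '' B := by
    ext z
    cases z with
    | inl c =>
      simp only [Set.mem_union, Set.mem_inter_iff, Set.mem_range, Set.mem_image, hB,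
        Set.mem_setOf_eq]
      constructor
      · intro h
        exact Or.inl ⟨h, c, rfl⟩
      · rintro (⟨h, -⟩ | ⟨t, -, h⟩)
        · exact h
        · exact absurd h Sum.inr_ne_inl
    | inr t =>
      simp only [Set.mem_union, Set.mem_inter_iff, Set.mem_range, Set.mem_image, hB,
        Set.mem_setOf_eq]
      constructor
      · intro h
        exact Or.inr ⟨t, h, rfl⟩
      · rintro (⟨h, c, hc⟩ | ⟨u, hu, h⟩)
        · exact absurd hc (Sum.inl_ne_inr)
        · rwa [← Sum.inr_injective h]
  have hdisjS : Disjoint (S1 ∩ Set.range (Sum.inl : (Bool ⊕ ↥G.edgeSet) → SigmaVert V G))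
      (Sum.inr '' B) := by
    rw [Set.disjoint_left]
    rintro z ⟨-, c, rfl⟩ ⟨t, -, h⟩
    exact Sum.inl_ne_inr h.symm
  have hscard : S1.ncard = (S1 ∩ Set.range Sum.inl).ncard + B.ncard := by
    calc S1.ncard = ((S1 ∩ Set.range Sum.inl) ∪ Sum.inr '' B).ncard := by rw [← hS1dec]
      _ = (S1 ∩ Set.range Sum.inl).ncard + (Sum.inr '' B).ncard :=
          Set.ncard_union_eq hdisjS (Set.toFinite _) (Set.toFinite _)
      _ = (S1 ∩ Set.range Sum.inl).ncard + B.ncard := by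
          rw [Set.ncard_image_of_injective _ Sum.inr_injective]
  -- bound the clique part of S1
  have hcl : (S1 ∩ Set.range Sum.inl).ncard ≤ 2 + Min.ncard := by
    have hsub : S1 ∩ Set.range Sum.inl ⊆
        Set.range (fun b : Bool => (Sum.inl (Sum.inl b) : SigmaVert V G)) ∪
          (fun e : ↥G.edgeSet => (Sum.inl (Sum.inr e) : SigmaVert V G)) '' Min := by
      rintro z ⟨hz, c, rfl⟩
      cases c with
      | inl b => exact Or.inl ⟨b, rfl⟩
      | inr e => exact Or.inr ⟨e, hz, rfl⟩
    calc (S1 ∩ Set.range Sum.inl).ncard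
        ≤ (Set.range (fun b : Bool => (Sum.inl (Sum.inl b) : SigmaVert V G)) ∪
            (fun e : ↥G.edgeSet => (Sum.inl (Sum.inr e) : SigmaVert V G)) '' Min).ncard :=
          Set.ncard_le_ncard hsub (Set.toFinite _)
      _ ≤ (Set.range (fun b : Bool => (Sum.inl (Sum.inl b) : SigmaVert V G))).ncard +
            ((fun e : ↥G.edgeSet => (Sum.inl (Sum.inr e) : SigmaVert V G)) '' Min).ncard :=
          Set.ncard_union_le _ _
      _ ≤ 2 + Min.ncard := by
          have e1 : (Set.range (fun b : Bool => (Sum.inl (Sum.inl b) : SigmaVert V G))).ncard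
              = 2 := by
            rw [← Set.image_univ, Set.ncard_image_of_injective _
              (fun x y h => Sum.inl_injective (Sum.inl_injective h)), Set.ncard_univ]
            simp
          have e2 : ((fun e : ↥G.edgeSet => (Sum.inl (Sum.inr e) : SigmaVert V G)) '' Min).ncard
              = Min.ncard := Set.ncard_image_of_injective _
                (fun x y h => Sum.inr_injective (Sum.inl_injective h))
          omega
  by_cases hAuniv : A = Set.univ
  · -- degenerate case: G has no edges at all, so V is a single vertex
    have hno : ∀ u v : V, ¬ G.Adj u v := fun u v h =>
      hAind u v h ⟨by simp [hAuniv], by simp [hAuniv]⟩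
    have hn1 : Fintype.card V ≤ 1 := by
      by_contra hc
      push_neg at hc
      obtain ⟨u, v, huv⟩ := Fintype.exists_pair_of_one_lt_card (α := V) (by omega)
      obtain ⟨w⟩ := hconn.preconnected u v
      cases w with
      | nil => exact huv rfl
      | cons h p => exact hno _ _ h
    have hm0 : Nat.card ↥G.edgeSet = 0 := by
      have hempty : G.edgeSet = ∅ := by
        ext q
        induction q with
        | _ x y => simp [hno]
      rw [hempty]
      simp
    have hslt : S1.ncard < 2 + Nat.card ↥G.edgeSet + Fintype.card V := by
      have := Set.ncard_lt_ncard h1.1 (Set.toFinite _)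
      rwa [Set.ncard_univ, sigma_card_vert] at this
    obtain ⟨hpds, hcard⟩ := sigma_clique_union_pds G hnm ∅ (by simp) (Set.empty_ne_univ)
    refine ⟨Set.range Sum.inl ∪ Sum.inr '' (∅ : Set V), hpds, ?_, Set.subset_union_left⟩
    rw [hcard]
    have := h1.2.1
    simp only [Set.ncard_empty]
    omega
  · obtain ⟨hpds, hcard⟩ := sigma_clique_union_pds G hnm A hAind hAuniv
    refine ⟨Set.range Sum.inl ∪ Sum.inr '' A, hpds, ?_, Set.subset_union_left⟩
    rw [hcard]
    omega
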